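/- arXiv:2510.09270 — 2 statements merged into one kernel-verified Lean document; each statement's English description precedes it below -/
import Mathlib

section
/- If the graph G contains no colliders, then for every ν ∈ P(X) the measure ν^A does not depend on the particular choice of the regular conditional kernels of ν used in its construction. Moreover, for every fully connected subset I ⊆ {1,...,K} (i.e., there is an edge between any two nodes of I) and every cell c_I of the induced partition A_I, one has ν^A(c_I) = ν(c_I). -/
open MeasureTheory Finset
open scoped ENNReal NNReal

noncomputable section

abbrev I01 : Type := unitInterval

def half : I01 := ⟨1 / 2, by norm_num⟩

/-- Index of the dyadic cell of side length `2^{-η}` containing `t ∈ [0,1]`. -/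
def cIdx (η : ℕ) (t : I01) : ℕ := min ⌊(t : ℝ) * 2 ^ η⌋₊ (2 ^ η - 1)

lemma cIdx_le_real (η : ℕ) (t : I01) : (cIdx η t : ℝ) ≤ 2 ^ η - 1 := by
  have h : cIdx η t ≤ 2 ^ η - 1 := min_le_right _ _
  have h1 : (1 : ℕ) ≤ 2 ^ η := Nat.one_le_two_pow
  calc (cIdx η t : ℝ) ≤ ((2 ^ η - 1 : ℕ) : ℝ) := by exact_mod_cast h
    _ = 2 ^ η - 1 := by rw [Nat.cast_sub h1]; push_cast; ring

/-- Midpoint of the dyadic cell of side length `2^{-η}` containing `t`. -/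
def cMid (η : ℕ) (t : I01) : I01 :=
  ⟨((cIdx η t : ℝ) + 1 / 2) / 2 ^ η, by
    constructor
    · positivity
    · rw [div_le_one (by positivity)]
      have := cIdx_le_real η t
      linarith⟩

/-- Order-1 Wasserstein distance (w.r.t. the given metric, infimum over couplings). -/
def Wass {α : Type*} [MeasurableSpace α] [PseudoMetricSpace α] (μ ν : Measure α) : ℝ :=
  sInf {r | ∃ π : Measure (α × α), π.map Prod.fst = μ ∧ π.map Prod.snd = ν ∧
    r = ∫ p, dist p.1 p.2 ∂π}

/-- Total variation distance, `sup { ∫ f dμ - ∫ f dν : f measurable, |f| ≤ 1/2 }`. -/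
def TVDist {α : Type*} [MeasurableSpace α] (μ ν : Measure α) : ℝ :=
  sSup {r | ∃ f : α → ℝ, Measurable f ∧ (∀ x, |f x| ≤ 1 / 2) ∧
    r = (∫ x, f x ∂μ) - ∫ x, f x ∂ν}

/-- Total variation norm of a signed measure, `sup { ∫ f dν : |f| ≤ 1/2 } = |ν|(univ)/2`. -/
def tvNorm {α : Type*} [MeasurableSpace α] (s : SignedMeasure α) : ℝ :=
  (s.totalVariation Set.univ).toReal / 2

/-- `m` conditioned on `s` (normalized restriction), Dirac at `x₀` if `m s = 0`. -/
def condOn {α : Type*} [MeasurableSpace α] (m : Measure α) (s : Set α) (x₀ : α) : Measure α :=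
  if m s = 0 then Measure.dirac x₀ else (m s)⁻¹ • m.restrict s

/-- Empirical measure of the sample `ω`. -/
def empOf {α : Type*} [MeasurableSpace α] (n : ℕ) (ω : Fin n → α) : Measure α :=
  (n : ℝ≥0∞)⁻¹ • ∑ i : Fin n, Measure.dirac (ω i)

/-- Law of `n` i.i.d. samples from `μ`. -/
def iid {α : Type*} [MeasurableSpace α] (n : ℕ) (μ : Measure α) : Measure (Fin n → α) :=
  Measure.pi fun _ => μ

section Graphical

variable {K : ℕ}

abbrev Coord (d : Fin K → ℕ) (k : Fin K) : Type := Fin (d k) → I01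
abbrev Pt (d : Fin K → ℕ) : Type := ∀ k : Fin K, Coord d k
abbrev PtOn (d : Fin K → ℕ) (I : Finset (Fin K)) : Type := ∀ j : I, Coord d j.1

def projOn (d : Fin K → ℕ) (I : Finset (Fin K)) (x : Pt d) : PtOn d I := fun j => x j.1

def restrOn (d : Fin K → ℕ) {I J : Finset (Fin K)} (h : I ⊆ J) (y : PtOn d J) : PtOn d I :=
  fun j => y ⟨j.1, h j.2⟩

def basePt (d : Fin K → ℕ) : Pt d := fun _ _ => half

/-- The cell of the partition of `X_I` into cubes of side length `2^{-η}` containing `x`. -/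
def cellOn (d : Fin K → ℕ) (η : ℕ) (I : Finset (Fin K)) (x : PtOn d I) : Set (PtOn d I) :=
  {y | ∀ j i, cIdx η (y j i) = cIdx η (x j i)}

/-- The cylinder over the cell of `A_I` containing the coordinates `x_I` of `x`. -/
def cylOf (d : Fin K → ℕ) (η : ℕ) (I : Finset (Fin K)) (x : Pt d) : Set (Pt d) :=
  {y | ∀ j ∈ I, ∀ i, cIdx η (y j i) = cIdx η (x j i)}

def midPtOn (d : Fin K → ℕ) (η : ℕ) (I : Finset (Fin K)) (x : PtOn d I) : PtOn d I :=
  fun j i => cMid η (x j i)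

def midPt (d : Fin K → ℕ) (η : ℕ) (x : Pt d) : Pt d := fun k i => cMid η (x k i)

/-- The DAG (given by its parent map) is topologically sorted. -/
def SortedGraph (pa : Fin K → Finset (Fin K)) : Prop := ∀ k, ∀ j ∈ pa k, j < k

/-- A set of nodes is fully connected (any two of its nodes are joined by an edge). -/
def FullConn (pa : Fin K → Finset (Fin K)) (I : Finset (Fin K)) : Prop :=
  ∀ i ∈ I, ∀ j ∈ I, i < j → i ∈ pa j

/-- The graph has no colliders: every parent set is fully connected. -/
def NoColliders (pa : Fin K → Finset (Fin K)) : Prop := ∀ k, FullConn pa (pa k)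

def below (k : Fin K) : Finset (Fin K) := Finset.univ.filter fun j => j < k
def uptoI (k : Fin K) : Finset (Fin K) := Finset.univ.filter fun j => j ≤ k
def preOf (pa : Fin K → Finset (Fin K)) (k : Fin K) : Finset (Fin K) := uptoI k \ pa k

def dpa (d : Fin K → ℕ) (pa : Fin K → Finset (Fin K)) (k : Fin K) : ℕ := ∑ j ∈ pa k, d j

def dloc (d : Fin K → ℕ) (pa : Fin K → Finset (Fin K)) : ℕ :=
  Finset.univ.sup fun k : Fin K => max 2 (d k) + dpa d pa k

def dmax (d : Fin K → ℕ) : ℕ := Finset.univ.sup fun k : Fin K => max 2 (d k)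

/-- `κ` is a regular conditional distribution of the coordinates in `J` given those in `I`,
under `μ`. -/
def IsCondD (d : Fin K → ℕ) (μ : Measure (Pt d)) (I J : Finset (Fin K))
    (κ : PtOn d I → Measure (PtOn d J)) : Prop :=
  Measurable κ ∧ (∀ y, IsProbabilityMeasure (κ y)) ∧
    ∀ (A : Set (PtOn d I)) (B : Set (PtOn d J)), MeasurableSet A → MeasurableSet B →
      μ {x | projOn d I x ∈ A ∧ projOn d J x ∈ B} = ∫⁻ y in A, κ y B ∂(μ.map (projOn d I))

/-- `μ ∈ P_G`: for each node, some conditional distribution of `x_k` given all earlier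
coordinates factors through the parent coordinates only. -/
def MemPG (d : Fin K → ℕ) (pa : Fin K → Finset (Fin K)) (μ : Measure (Pt d)) : Prop :=
  ∀ k : Fin K, ∃ κ : PtOn d (pa k) → Measure (PtOn d ({k} : Finset (Fin K))),
    IsCondD d μ (below k ∪ pa k) {k}
      fun y => κ (restrOn d (fun _ hj => Finset.mem_union_right _ hj) y)

/-- Wasserstein-Lipschitz kernel assumption with constant `L`. -/
def WLip (d : Fin K → ℕ) (pa : Fin K → Finset (Fin K)) (L : ℝ) (μ : Measure (Pt d)) : Prop :=
  ∀ k : Fin K, 1 ≤ k.1 →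
    ∃ κ : PtOn d (pa k) → Measure (PtOn d ({k} : Finset (Fin K))),
      IsCondD d μ (pa k) {k} κ ∧
        ∀ x x' : PtOn d (pa k), Wass (κ x) (κ x') ≤ L * dist x x'

/-- Total-variation-Lipschitz kernel assumption with constant `L`. -/
def TVLip (d : Fin K → ℕ) (pa : Fin K → Finset (Fin K)) (L : ℝ) (μ : Measure (Pt d)) : Prop :=
  ∀ k : Fin K, 1 ≤ k.1 →
    (∃ κ : PtOn d (pa k) → Measure (PtOn d ({k} : Finset (Fin K))),
      IsCondD d μ (pa k) {k} κ ∧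
        ∀ x x', TVDist (κ x) (κ x') ≤ L * dist x x') ∧
    (∃ κ : PtOn d (pa k) → Measure (PtOn d (preOf pa k)),
      IsCondD d μ (pa k) (preOf pa k) κ ∧
        ∀ x x', TVDist (κ x) (κ x') ≤ L * dist x x') ∧
    (∃ κ : PtOn d ({k} : Finset (Fin K)) → Measure (PtOn d (pa k)),
      IsCondD d μ {k} (pa k) κ ∧
        ∀ x x', TVDist (κ x) (κ x') ≤ L * dist x x')

/-- Iterated construction of the graph product measure `∏_k κ_k(dx_k | x_pa(k))`. -/
def chainM (d : Fin K → ℕ) (pa : Fin K → Finset (Fin K))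
    (κ : ∀ k : Fin K, PtOn d (pa k) → Measure (PtOn d ({k} : Finset (Fin K)))) :
    ℕ → Measure (Pt d)
  | 0 => Measure.dirac (basePt d)
  | n + 1 =>
      if h : n < K then
        (chainM d pa κ n).bind fun x =>
          (κ ⟨n, h⟩ (projOn d (pa ⟨n, h⟩) x)).map fun y =>
            Function.update x ⟨n, h⟩ (y ⟨⟨n, h⟩, Finset.mem_singleton_self _⟩)
      else chainM d pa κ n

def graphProd (d : Fin K → ℕ) (pa : Fin K → Finset (Fin K))
    (κ : ∀ k : Fin K, PtOn d (pa k) → Measure (PtOn d ({k} : Finset (Fin K)))) :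
    Measure (Pt d) := chainM d pa κ K

/-- Completion of `x ∈ X_pa(k)` to a point of `X` (cell midpoints on `pa k`, `1/2` elsewhere). -/
def extendPt (d : Fin K → ℕ) (pa : Fin K → Finset (Fin K)) (η : ℕ) (k : Fin K)
    (x : PtOn d (pa k)) : Pt d :=
  fun j => if h : j ∈ pa k then (fun i => cMid η (x ⟨j, h⟩ i)) else fun _ => half

/-- The measure `ν^A` built from a choice `κ` of conditional kernels of `ν`. -/
def opA (d : Fin K → ℕ) (pa : Fin K → Finset (Fin K)) (η : ℕ) (ν : Measure (Pt d))
    (κ : ∀ k : Fin K, PtOn d (pa k) → Measure (PtOn d ({k} : Finset (Fin K)))) :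
    Measure (Pt d) :=
  graphProd d pa fun k x =>
    (condOn (ν.map (projOn d (pa k))) (cellOn d η (pa k) x) (midPtOn d η (pa k) x)).bind (κ k)

/-- The canonical (kernel-choice free) version of `ν^A`. -/
def opACanon (d : Fin K → ℕ) (pa : Fin K → Finset (Fin K)) (η : ℕ) (ν : Measure (Pt d)) :
    Measure (Pt d) :=
  graphProd d pa fun k x =>
    (condOn ν (projOn d (pa k) ⁻¹' cellOn d η (pa k) x) (extendPt d pa η k x)).map
      (projOn d ({k} : Finset (Fin K)))

/-- The kernel `μ^{bA}(dx_k | x_pa(k)) = Σ_{c_k} μ(c_k | c_pa(k)(x_pa(k))) μ_{k|c_k}(dx_k)`. -/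
def kerBA (d : Fin K → ℕ) (pa : Fin K → Finset (Fin K)) (η : ℕ) (μ : Measure (Pt d))
    (k : Fin K) (x : PtOn d (pa k)) : Measure (PtOn d ({k} : Finset (Fin K))) :=
  (((condOn μ (projOn d (pa k) ⁻¹' cellOn d η (pa k) x) (extendPt d pa η k x)).map
      (projOn d ({k} : Finset (Fin K)))).bind) fun z =>
    condOn (μ.map (projOn d ({k} : Finset (Fin K)))) (cellOn d η {k} z) (midPtOn d η {k} z)

/-- The measure `μ^{bA}`. -/
def opBA (d : Fin K → ℕ) (pa : Fin K → Finset (Fin K)) (η : ℕ) (μ : Measure (Pt d)) :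
    Measure (Pt d) := graphProd d pa (kerBA d pa η μ)

/-- The midpoint projection `μ^M` of `μ^{bA}`. -/
def opM (d : Fin K → ℕ) (pa : Fin K → Finset (Fin K)) (η : ℕ) (μ : Measure (Pt d)) :
    Measure (Pt d) := (opBA d pa η μ).map (midPt d η)

/-- The kernel of `μ^M` built from the conditional kernel `κ` of `μ`:
cell-average of `κ`, pushed to cell midpoints. -/
def kerM (d : Fin K → ℕ) (pa : Fin K → Finset (Fin K)) (η : ℕ) (μ : Measure (Pt d)) (k : Fin K)
    (κ : PtOn d (pa k) → Measure (PtOn d ({k} : Finset (Fin K)))) (y : PtOn d (pa k)) :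
    Measure (PtOn d ({k} : Finset (Fin K))) :=
  ((condOn (μ.map (projOn d (pa k))) (cellOn d η (pa k) y) (midPtOn d η (pa k) y)).bind κ).map
    (midPtOn d η ({k} : Finset (Fin K)))

/-- `m(dx_k | c_pa(k)(x))`: `m` conditioned on the parent cell of `x`, projected to node `k`. -/
def cellCondProj (d : Fin K → ℕ) (pa : Fin K → Finset (Fin K)) (η : ℕ) (m : Measure (Pt d))
    (k : Fin K) (x : Pt d) : Measure (PtOn d ({k} : Finset (Fin K))) :=
  (condOn m (projOn d (pa k) ⁻¹' cellOn d η (pa k) (projOn d (pa k) x)) (midPt d η x)).map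
    (projOn d ({k} : Finset (Fin K)))

/-- Minimax risk `V_Q(n)` for estimating a measure in `Q` from `n` i.i.d. samples,
in Wasserstein distance. -/
def minimax (d : Fin K → ℕ) (Q : Set (Measure (Pt d))) (n : ℕ) : ℝ :=
  ⨅ E : {E : (Fin n → Pt d) → Measure (Pt d) // Measurable E},
    ⨆ μ : Q, ∫ ω, Wass (μ : Measure (Pt d)) (E.1 ω) ∂(iid n (μ : Measure (Pt d)))

/-- Number of directed paths of length `ℓ` starting at `k` (following edge directions). -/
def pathCount (pa : Fin K → Finset (Fin K)) : ℕ → Fin K → ℕ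
  | 0, _ => 1
  | ℓ + 1, k => ∑ j ∈ Finset.univ.filter (fun j => k ∈ pa j), pathCount pa ℓ j

/-- The constant `M_{L,k} = 1 + Σ_{ℓ=1}^K a_{k,ℓ} L^ℓ`. -/
def MConst (pa : Fin K → Finset (Fin K)) (L : ℝ) (k : Fin K) : ℝ :=
  1 + ∑ ℓ ∈ Finset.Icc 1 K, (pathCount pa ℓ k : ℝ) * L ^ ℓ

/-- Lebesgue measure on `[0,1]^d = Π_k Π_i [0,1]`. -/
def lebPt (d : Fin K → ℕ) : Measure (Pt d) :=
  Measure.pi fun k => Measure.pi fun _ : Fin (d k) => (volume : Measure ℝ).comap Subtype.val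

/-- Product of the (one-node) marginals of `ν`. -/
def prodMarg (d : Fin K → ℕ) (ν : Measure (Pt d)) : Measure (Pt d) :=
  Measure.pi fun k => ν.map fun x => x k

/-- Cell average `f^ν` of `f` w.r.t. the product of the marginals of `ν`. -/
def fAvg (d : Fin K → ℕ) (η : ℕ) (ν : Measure (Pt d)) (f : Pt d → ℝ) (x : Pt d) : ℝ :=
  if prodMarg d ν (cylOf d η Finset.univ x) = 0 then 0
  else (∫ y in cylOf d η Finset.univ x, f y ∂prodMarg d ν) /
    (prodMarg d ν (cylOf d η Finset.univ x)).toReal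

/-- Combining points over two disjoint blocks of nodes. -/
def glue (d : Fin K → ℕ) {J J' : Finset (Fin K)} (p : PtOn d J × PtOn d J') :
    PtOn d (J ∪ J') := fun j =>
  if h : j.1 ∈ J then p.1 ⟨j.1, h⟩
  else p.2 ⟨j.1, by
    rcases Finset.mem_union.mp j.2 with h' | h'
    · exact absurd h' h
    · exact h'⟩

/-- `X_J` and `X_J'` are conditionally independent given `X_I` under `μ`. -/
def CondIndepOn (d : Fin K → ℕ) (μ : Measure (Pt d)) (I J J' : Finset (Fin K)) : Prop :=
  ∃ (κJ : PtOn d I → Measure (PtOn d J)) (κJ' : PtOn d I → Measure (PtOn d J')),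
    IsCondD d μ I J κJ ∧ IsCondD d μ I J' κJ' ∧
      IsCondD d μ I (J ∪ J') fun y => ((κJ y).prod (κJ' y)).map (glue d)

/-- The set `P_CI` of probability measures all of whose disjoint coordinate blocks are
conditionally independent given any disjoint nonempty block. -/
def PCI (d : Fin K → ℕ) : Set (Measure (Pt d)) :=
  {μ | IsProbabilityMeasure μ ∧
    ∀ I J J' : Finset (Fin K), I.Nonempty → Disjoint I J → Disjoint I J' → Disjoint J J' →
      CondIndepOn d μ I J J'}

end Graphical

section TwoBlocks

abbrev Vec (m : ℕ) : Type := Fin m → I01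

def cellV (η : ℕ) {m : ℕ} (x : Vec m) : Set (Vec m) :=
  {y | ∀ i, cIdx η (y i) = cIdx η (x i)}

def midV (η : ℕ) {m : ℕ} (x : Vec m) : Vec m := fun i => cMid η (x i)

/-- `ν^A` for two blocks and the graph `1 → 2`. -/
def opA2 {m₁ m₂ : ℕ} (η : ℕ) (ν : Measure (Vec m₁ × Vec m₂)) : Measure (Vec m₁ × Vec m₂) :=
  ν.bind fun p =>
    ((condOn ν (Prod.fst ⁻¹' cellV η p.1) (midV η p.1, midV η p.2)).map Prod.snd).map
      fun y => (p.1, y)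

/-- `μ^{bA}` for two blocks:  `Σ_{c₁,c₂} μ(c₁ × c₂) (μ_{1|c₁} ⊗ μ_{2|c₂})`. -/
def opBA2 {m₁ m₂ : ℕ} (η : ℕ) (μ : Measure (Vec m₁ × Vec m₂)) : Measure (Vec m₁ × Vec m₂) :=
  μ.bind fun p =>
    (condOn (μ.map Prod.fst) (cellV η p.1) (midV η p.1)).prod
      (condOn (μ.map Prod.snd) (cellV η p.2) (midV η p.2))

/-- The kernel `μ^{bA}(dx₂ | x₁) = Σ_{c₂} μ(c₂ | c₁(x₁)) μ_{2|c₂}(dx₂)`. -/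
def kerBA2 {m₁ m₂ : ℕ} (η : ℕ) (μ : Measure (Vec m₁ × Vec m₂)) (x₁ : Vec m₁) :
    Measure (Vec m₂) :=
  (((condOn μ (Prod.fst ⁻¹' cellV η x₁) (midV η x₁, fun _ => half)).map Prod.snd).bind) fun z =>
    condOn (μ.map Prod.snd) (cellV η z) (midV η z)

/-- `κ` is a conditional distribution of the second block given the first, under `μ`. -/
def IsCD2 {m₁ m₂ : ℕ} (μ : Measure (Vec m₁ × Vec m₂)) (κ : Vec m₁ → Measure (Vec m₂)) : Prop :=
  Measurable κ ∧ (∀ x, IsProbabilityMeasure (κ x)) ∧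
    ∀ (A : Set (Vec m₁)) (B : Set (Vec m₂)), MeasurableSet A → MeasurableSet B →
      μ (A ×ˢ B) = ∫⁻ x in A, κ x B ∂(μ.map Prod.fst)

end TwoBlocks

end
section Stmt4Aux

open scoped ENNReal

noncomputable section

variable {K : ℕ}

lemma measurable_cIdx (η : ℕ) : Measurable (cIdx η) := by
  have h1 : Measurable fun t : I01 => ⌊(t : ℝ) * 2 ^ η⌋₊ :=
    Nat.measurable_floor.comp (measurable_subtype_coe.mul_const _)
  exact (measurable_of_countable fun n : ℕ => min n (2 ^ η - 1)).comp h1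

lemma measurable_cMid (η : ℕ) : Measurable (cMid η) := by
  unfold cMid
  exact ((measurable_of_countable
    (fun n : ℕ => ((n : ℝ) + 1 / 2) / 2 ^ η)).comp (measurable_cIdx η)).subtype_mk

lemma measurable_projOn (d : Fin K → ℕ) (I : Finset (Fin K)) :
    Measurable (projOn d I) :=
  measurable_pi_lambda _ fun j => measurable_pi_apply j.1

/-- Code of a point of `X_I`: the collection of dyadic indices of its coordinates. -/
def codeOn (d : Fin K → ℕ) (η : ℕ) (I : Finset (Fin K)) (y : PtOn d I) :
    (j : I) → Fin (d j.1) → ℕ := fun j i => cIdx η (y j i)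

def code (d : Fin K → ℕ) (η : ℕ) (I : Finset (Fin K)) (x : Pt d) :
    (j : I) → Fin (d j.1) → ℕ := codeOn d η I (projOn d I x)

lemma measurable_codeOn (d : Fin K → ℕ) (η : ℕ) (I : Finset (Fin K)) :
    Measurable (codeOn d η I) :=
  measurable_pi_lambda _ fun j => measurable_pi_lambda _ fun i =>
    (measurable_cIdx η).comp ((measurable_pi_apply i).comp (measurable_pi_apply j))

lemma measurable_code (d : Fin K → ℕ) (η : ℕ) (I : Finset (Fin K)) :
    Measurable (code d η I) :=
  (measurable_codeOn d η I).comp (measurable_projOn d I)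

lemma measurable_midPtOn (d : Fin K → ℕ) (η : ℕ) (I : Finset (Fin K)) :
    Measurable (midPtOn d η I) :=
  measurable_pi_lambda _ fun j => measurable_pi_lambda _ fun i =>
    (measurable_cMid η).comp ((measurable_pi_apply i).comp (measurable_pi_apply j))

lemma cellOn_eq (d : Fin K → ℕ) (η : ℕ) (I : Finset (Fin K)) (y : PtOn d I) :
    cellOn d η I y = codeOn d η I ⁻¹' {codeOn d η I y} := by
  ext z
  simp only [cellOn, Set.mem_setOf_eq, Set.mem_preimage, Set.mem_singleton_iff]
  constructor
  · intro h; funext j i; exact h j i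
  · intro h j i; exact congrFun (congrFun h j) i

lemma cylOf_eq (d : Fin K → ℕ) (η : ℕ) (I : Finset (Fin K)) (x : Pt d) :
    cylOf d η I x = code d η I ⁻¹' {code d η I x} := by
  ext z
  simp only [cylOf, Set.mem_setOf_eq, Set.mem_preimage, Set.mem_singleton_iff]
  constructor
  · intro h; funext j i; exact h j.1 j.2 i
  · intro h j hj i; exact congrFun (congrFun h ⟨j, hj⟩) i

lemma measurableSet_cellOn (d : Fin K → ℕ) (η : ℕ) (I : Finset (Fin K)) (y : PtOn d I) :
    MeasurableSet (cellOn d η I y) := by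
  rw [cellOn_eq]
  exact measurable_codeOn d η I (MeasurableSet.singleton _)

lemma measurableSet_codeSet (d : Fin K → ℕ) (η : ℕ) (I : Finset (Fin K))
    (s : Set ((j : I) → Fin (d j.1) → ℕ)) : MeasurableSet s :=
  s.to_countable.measurableSet

end
end Stmt4Aux
section Stmt4Aux2
open scoped ENNReal
noncomputable section
variable {K : ℕ}

lemma isProbabilityMeasure_condOn {α : Type*} [MeasurableSpace α] (m : Measure α)
    [IsFiniteMeasure m] (s : Set α) (x₀ : α) (hs : MeasurableSet s) :
    IsProbabilityMeasure (condOn m s x₀) := by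
  unfold condOn
  split_ifs with h
  · infer_instance
  · refine ⟨?_⟩
    rw [Measure.smul_apply, Measure.restrict_apply_univ, smul_eq_mul,
      ENNReal.inv_mul_cancel h (measure_ne_top m s)]

lemma condOn_apply_of_ne {α : Type*} [MeasurableSpace α] (m : Measure α) (s : Set α) (x₀ : α)
    (h : m s ≠ 0) (t : Set α) (ht : MeasurableSet t) :
    condOn m s x₀ t = (m s)⁻¹ * m (t ∩ s) := by
  unfold condOn
  rw [if_neg h, Measure.smul_apply, Measure.restrict_apply ht, smul_eq_mul]

/-- Measurability of the conditional-on-cell measure family. -/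
lemma measurable_condOn_cell (d : Fin K → ℕ) (η : ℕ) (I : Finset (Fin K))
    (m : Measure (PtOn d I)) :
    Measurable fun y => condOn m (cellOn d η I y) (midPtOn d η I y) := by
  rw [Measure.measurable_measure]
  intro s hs
  have hcell : ∀ y, condOn m (cellOn d η I y) (midPtOn d η I y) s =
      if m (cellOn d η I y) = 0 then Set.indicator s 1 (midPtOn d η I y)
      else (m (cellOn d η I y))⁻¹ * m (s ∩ cellOn d η I y) := by
    intro y
    unfold condOn
    split_ifs with h
    · exact Measure.dirac_apply' _ hs
    · rw [Measure.smul_apply, Measure.restrict_apply hs, smul_eq_mul]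
  simp only [hcell]
  have hm1 : Measurable fun y => m (cellOn d η I y) := by
    have : (fun y => m (cellOn d η I y)) =
        (fun c => m (codeOn d η I ⁻¹' {c})) ∘ codeOn d η I := by
      funext y; simp [cellOn_eq, Function.comp]
    rw [this]
    exact (measurable_of_countable _).comp (measurable_codeOn d η I)
  have hm2 : Measurable fun y => m (s ∩ cellOn d η I y) := by
    have : (fun y => m (s ∩ cellOn d η I y)) =
        (fun c => m (s ∩ codeOn d η I ⁻¹' {c})) ∘ codeOn d η I := by
      funext y; simp [cellOn_eq, Function.comp]
    rw [this]
    exact (measurable_of_countable _).comp (measurable_codeOn d η I)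
  have hm3 : Measurable fun y => Set.indicator s (1 : PtOn d I → ℝ≥0∞) (midPtOn d η I y) :=
    ((measurable_one.indicator hs)).comp (measurable_midPtOn d η I)
  exact Measurable.ite (hm1 (MeasurableSet.singleton 0)) hm3 (Measurable.mul hm1.inv hm2)

/-- The kernel used in `opA`. -/
def kerA (d : Fin K → ℕ) (pa : Fin K → Finset (Fin K)) (η : ℕ) (ν : Measure (Pt d))
    (κ : ∀ k : Fin K, PtOn d (pa k) → Measure (PtOn d ({k} : Finset (Fin K)))) (k : Fin K)
    (x : PtOn d (pa k)) : Measure (PtOn d ({k} : Finset (Fin K))) :=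
  (condOn (ν.map (projOn d (pa k))) (cellOn d η (pa k) x) (midPtOn d η (pa k) x)).bind (κ k)

lemma opA_eq_chain (d : Fin K → ℕ) (pa : Fin K → Finset (Fin K)) (η : ℕ) (ν : Measure (Pt d))
    (κ : ∀ k : Fin K, PtOn d (pa k) → Measure (PtOn d ({k} : Finset (Fin K)))) :
    opA d pa η ν κ = chainM d pa (kerA d pa η ν κ) K := rfl

lemma measurable_kerA (d : Fin K → ℕ) (pa : Fin K → Finset (Fin K)) (η : ℕ) (ν : Measure (Pt d))
    (κ : ∀ k : Fin K, PtOn d (pa k) → Measure (PtOn d ({k} : Finset (Fin K)))) (k : Fin K)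
    (hκ : Measurable (κ k)) : Measurable (kerA d pa η ν κ k) :=
  (Measure.measurable_bind' hκ).comp (measurable_condOn_cell d η (pa k) _)

lemma isProbabilityMeasure_kerA (d : Fin K → ℕ) (pa : Fin K → Finset (Fin K)) (η : ℕ)
    (ν : Measure (Pt d)) [IsProbabilityMeasure ν]
    (κ : ∀ k : Fin K, PtOn d (pa k) → Measure (PtOn d ({k} : Finset (Fin K)))) (k : Fin K)
    (hκ : Measurable (κ k)) (hκp : ∀ y, IsProbabilityMeasure (κ k y)) (x : PtOn d (pa k)) :
    IsProbabilityMeasure (kerA d pa η ν κ k x) := by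
  have hmap : IsProbabilityMeasure (ν.map (projOn d (pa k))) :=
    Measure.isProbabilityMeasure_map (measurable_projOn d (pa k)).aemeasurable
  have hc : IsProbabilityMeasure
      (condOn (ν.map (projOn d (pa k))) (cellOn d η (pa k) x) (midPtOn d η (pa k) x)) :=
    isProbabilityMeasure_condOn _ _ _ (measurableSet_cellOn d η (pa k) x)
  refine ⟨?_⟩
  rw [kerA, Measure.bind_apply MeasurableSet.univ hκ.aemeasurable]
  rw [lintegral_congr (fun y => (hκp y).measure_univ), lintegral_one, hc.measure_univ]
end
end Stmt4Aux2
section Stmt4Aux3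
open scoped ENNReal
open ProbabilityTheory
noncomputable section
variable {K : ℕ}

def upd (d : Fin K → ℕ) (k : Fin K) (x : Pt d) (y : PtOn d ({k} : Finset (Fin K))) : Pt d :=
  Function.update x k (y ⟨k, Finset.mem_singleton_self _⟩)

lemma measurable_upd_right (d : Fin K → ℕ) (k : Fin K) (x : Pt d) :
    Measurable (upd d k x) :=
  (measurable_update x).comp (measurable_pi_apply _)

lemma measurable_upd_pair (d : Fin K → ℕ) (k : Fin K) :
    Measurable fun p : Pt d × PtOn d ({k} : Finset (Fin K)) => upd d k p.1 p.2 := by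
  apply measurable_pi_lambda
  intro j
  by_cases hj : j = k
  · subst hj
    simp only [upd, Function.update_self]
    exact (measurable_pi_apply _).comp measurable_snd
  · simp only [upd, Function.update_of_ne hj]
    exact (measurable_pi_apply j).comp measurable_fst

lemma measurable_step (d : Fin K → ℕ) (pa : Fin K → Finset (Fin K)) (k : Fin K)
    (κk : PtOn d (pa k) → Measure (PtOn d ({k} : Finset (Fin K)))) (hm : Measurable κk)
    (hp : ∀ y, IsProbabilityMeasure (κk y)) :
    Measurable fun x : Pt d => (κk (projOn d (pa k) x)).map (upd d k x) := by
  rw [Measure.measurable_measure]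
  intro s hs
  have heq : ∀ x, (κk (projOn d (pa k) x)).map (upd d k x) s
      = κk (projOn d (pa k) x) (upd d k x ⁻¹' s) := fun x =>
    Measure.map_apply (measurable_upd_right d k x) hs
  simp only [heq]
  set κ' : Kernel (Pt d) (PtOn d ({k} : Finset (Fin K))) :=
    ⟨fun x => κk (projOn d (pa k) x), hm.comp (measurable_projOn d (pa k))⟩ with hκ'
  haveI : IsMarkovKernel κ' := ⟨fun _ => hp _⟩
  have hT : MeasurableSet {p : Pt d × PtOn d ({k} : Finset (Fin K)) | upd d k p.1 p.2 ∈ s} :=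
    measurable_upd_pair d k hs
  have := Kernel.measurable_kernel_prodMk_left (κ := κ') hT
  exact this

lemma chainM_succ_lt (d : Fin K → ℕ) (pa : Fin K → Finset (Fin K))
    (κt : ∀ k : Fin K, PtOn d (pa k) → Measure (PtOn d ({k} : Finset (Fin K))))
    {n : ℕ} (h : n < K) :
    chainM d pa κt (n + 1) = (chainM d pa κt n).bind
      (fun x => (κt ⟨n, h⟩ (projOn d (pa ⟨n, h⟩) x)).map (upd d ⟨n, h⟩ x)) := by
  rw [chainM, dif_pos h]
  rfl

lemma chainM_succ_ge (d : Fin K → ℕ) (pa : Fin K → Finset (Fin K))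
    (κt : ∀ k : Fin K, PtOn d (pa k) → Measure (PtOn d ({k} : Finset (Fin K))))
    {n : ℕ} (h : ¬ n < K) :
    chainM d pa κt (n + 1) = chainM d pa κt n := by
  rw [chainM, dif_neg h]

lemma isProbabilityMeasure_chainM (d : Fin K → ℕ) (pa : Fin K → Finset (Fin K))
    (κt : ∀ k : Fin K, PtOn d (pa k) → Measure (PtOn d ({k} : Finset (Fin K))))
    (hm : ∀ k, Measurable (κt k)) (hp : ∀ k y, IsProbabilityMeasure (κt k y)) :
    ∀ n, IsProbabilityMeasure (chainM d pa κt n) := by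
  intro n
  induction n with
  | zero => rw [chainM]; infer_instance
  | succ n ih =>
    by_cases h : n < K
    · rw [chainM_succ_lt d pa κt h]
      refine ⟨?_⟩
      rw [Measure.bind_apply MeasurableSet.univ
        (measurable_step d pa ⟨n, h⟩ (κt ⟨n, h⟩) (hm _) (fun y => hp _ y)).aemeasurable]
      have h1 : ∀ x : Pt d,
          ((κt ⟨n, h⟩ (projOn d (pa ⟨n, h⟩) x)).map (upd d ⟨n, h⟩ x)) Set.univ = 1 := by
        intro x
        haveI := hp ⟨n, h⟩ (projOn d (pa ⟨n, h⟩) x)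
        haveI : IsProbabilityMeasure ((κt ⟨n, h⟩ (projOn d (pa ⟨n, h⟩) x)).map
            (upd d ⟨n, h⟩ x)) :=
          Measure.isProbabilityMeasure_map (measurable_upd_right d ⟨n, h⟩ x).aemeasurable
        exact measure_univ
      rw [lintegral_congr h1, lintegral_one, ih.measure_univ]
    · rw [chainM_succ_ge d pa κt h]; exact ih
end
end Stmt4Aux3
section Stmt4Aux4
open scoped ENNReal
noncomputable section
variable {K : ℕ}

lemma preimage_cellOn (d : Fin K → ℕ) (η : ℕ) (p : Finset (Fin K)) (x : Pt d) :
    projOn d p ⁻¹' cellOn d η p (projOn d p x) = code d η p ⁻¹' {code d η p x} := by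
  rw [cellOn_eq]; rfl

lemma kerA_eq_of_pos (d : Fin K → ℕ) (pa : Fin K → Finset (Fin K)) (η : ℕ) (ν : Measure (Pt d))
    (κ : ∀ k : Fin K, PtOn d (pa k) → Measure (PtOn d ({k} : Finset (Fin K)))) (k : Fin K)
    (hκ : IsCondD d ν (pa k) {k} (κ k)) (x : Pt d)
    (hpos : ν (code d η (pa k) ⁻¹' {code d η (pa k) x}) ≠ 0) :
    kerA d pa η ν κ k (projOn d (pa k) x) =
      (ν (code d η (pa k) ⁻¹' {code d η (pa k) x}))⁻¹ •
        ((ν.restrict (code d η (pa k) ⁻¹' {code d η (pa k) x})).map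
          (projOn d ({k} : Finset (Fin K)))) := by
  set C : Set (Pt d) := code d η (pa k) ⁻¹' {code d η (pa k) x} with hCdef
  have hC : MeasurableSet C := measurable_code d η (pa k) (MeasurableSet.singleton _)
  have hcellm : MeasurableSet (cellOn d η (pa k) (projOn d (pa k) x)) :=
    measurableSet_cellOn d η (pa k) _
  have hmapC : (ν.map (projOn d (pa k))) (cellOn d η (pa k) (projOn d (pa k) x)) = ν C := by
    rw [Measure.map_apply (measurable_projOn d (pa k)) hcellm, preimage_cellOn]
  have hcond : condOn (ν.map (projOn d (pa k))) (cellOn d η (pa k) (projOn d (pa k) x))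
      (midPtOn d η (pa k) (projOn d (pa k) x)) =
      (ν C)⁻¹ • (ν.map (projOn d (pa k))).restrict (cellOn d η (pa k) (projOn d (pa k) x)) := by
    unfold condOn
    rw [if_neg (by rw [hmapC]; exact hpos), hmapC]
  ext B hB
  rw [kerA, hcond, Measure.bind_apply hB hκ.1.aemeasurable, lintegral_smul_measure]
  have hcd := hκ.2.2 (cellOn d η (pa k) (projOn d (pa k) x)) B hcellm hB
  have hsetEq : {z : Pt d | projOn d (pa k) z ∈ cellOn d η (pa k) (projOn d (pa k) x) ∧
      projOn d ({k} : Finset (Fin K)) z ∈ B} = C ∩ projOn d ({k} : Finset (Fin K)) ⁻¹' B := by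
    rw [hCdef, ← preimage_cellOn d η (pa k) x]; rfl
  rw [hsetEq] at hcd
  rw [← hcd, Measure.smul_apply, smul_eq_mul,
    Measure.map_apply (measurable_projOn d ({k} : Finset (Fin K))) hB,
    Measure.restrict_apply (measurable_projOn d ({k} : Finset (Fin K)) hB),
    Set.inter_comm, smul_eq_mul]

lemma measure_badSet_eq_zero (d : Fin K → ℕ) (η : ℕ) (p : Finset (Fin K))
    (μ ν : Measure (Pt d)) (hme : μ.map (code d η p) = ν.map (code d η p)) :
    μ {x | ν (code d η p ⁻¹' {code d η p x}) = 0} = 0 := by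
  set Bad : Set ((j : p) → Fin (d j.1) → ℕ) := {c | ν (code d η p ⁻¹' {c}) = 0} with hBad
  have hBadm : MeasurableSet Bad := measurableSet_codeSet d η p Bad
  have hset : {x | ν (code d η p ⁻¹' {code d η p x}) = 0} = code d η p ⁻¹' Bad := rfl
  rw [hset, ← Measure.map_apply (measurable_code d η p) hBadm, hme]
  have : Bad = ⋃ c ∈ Bad, {c} := (Set.biUnion_of_singleton Bad).symm
  rw [this, measure_biUnion_null_iff Bad.to_countable]
  intro c hc
  rw [Measure.map_apply (measurable_code d η p) (MeasurableSet.singleton c)]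
  exact hc
end
end Stmt4Aux4
section Stmt4Aux5
open scoped ENNReal
noncomputable section
variable {K : ℕ}

lemma map_eq_of_subsingleton {α β : Type*} [MeasurableSpace α] [MeasurableSpace β]
    [Subsingleton β] (μ ν : Measure α) [IsProbabilityMeasure μ] [IsProbabilityMeasure ν]
    (f g : α → β) (hf : Measurable f) (hg : Measurable g) : μ.map f = ν.map g := by
  ext s hs
  rcases s.eq_empty_or_nonempty with rfl | hne
  · simp
  · obtain ⟨z, hz⟩ := hne
    have huniv : s = Set.univ := Set.eq_univ_of_forall fun y => (Subsingleton.elim z y) ▸ hz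
    subst huniv
    haveI : IsProbabilityMeasure (μ.map f) := Measure.isProbabilityMeasure_map hf.aemeasurable
    haveI : IsProbabilityMeasure (ν.map g) := Measure.isProbabilityMeasure_map hg.aemeasurable
    simp [measure_univ]

lemma lintegral_cellavg (d : Fin K → ℕ) (η : ℕ) (p : Finset (Fin K)) (ν : Measure (Pt d))
    [IsFiniteMeasure ν] (T : Set (Pt d)) (hT : MeasurableSet T) :
    ∫⁻ x, (ν (code d η p ⁻¹' {code d η p x}))⁻¹ *
      ν (code d η p ⁻¹' {code d η p x} ∩ T) ∂ν = ν T := by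
  set q : ((j : p) → Fin (d j.1) → ℕ) → ℝ≥0∞ := fun c =>
    (ν (code d η p ⁻¹' {c}))⁻¹ * ν (code d η p ⁻¹' {c} ∩ T) with hq
  have h1 : ∫⁻ x, q (code d η p x) ∂ν = ∫⁻ c, q c ∂(ν.map (code d η p)) :=
    (lintegral_map (measurable_of_countable q) (measurable_code d η p)).symm
  have h2 : ∫⁻ c, q c ∂(ν.map (code d η p)) =
      ∑' c, q c * (ν.map (code d η p)) {c} := lintegral_countable' q
  have hterm : ∀ c, q c * (ν.map (code d η p)) {c} = ν (code d η p ⁻¹' {c} ∩ T) := by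
    intro c
    rw [Measure.map_apply (measurable_code d η p) (MeasurableSet.singleton c)]
    set a := ν (code d η p ⁻¹' {c}) with ha
    by_cases hc : a = 0
    · have hb : ν (code d η p ⁻¹' {c} ∩ T) = 0 :=
        le_antisymm (le_trans (measure_mono Set.inter_subset_left) hc.le) (zero_le)
      rw [hq]; simp only [← ha, hc, hb, mul_zero]
    · rw [hq]
      simp only [← ha]
      rw [mul_comm a⁻¹ _, mul_assoc, ENNReal.inv_mul_cancel hc (measure_ne_top ν _), mul_one]
  have hcover : T = ⋃ c, (code d η p ⁻¹' {c} ∩ T) := by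
    ext z
    simp only [Set.mem_iUnion, Set.mem_inter_iff, Set.mem_preimage, Set.mem_singleton_iff]
    exact ⟨fun hz => ⟨code d η p z, rfl, hz⟩, fun ⟨c, _, hz⟩ => hz⟩
  have hdisj : Pairwise (Function.onFun Disjoint
      fun c => code d η p ⁻¹' {c} ∩ T) := by
    intro c c' hne
    exact Disjoint.mono Set.inter_subset_left Set.inter_subset_left
      (Disjoint.preimage _ (Set.disjoint_singleton.mpr hne))
  have hmeas : ∀ c, MeasurableSet (code d η p ⁻¹' {c} ∩ T) := fun c =>
    (measurable_code d η p (MeasurableSet.singleton c)).inter hT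
  calc ∫⁻ x, (ν (code d η p ⁻¹' {code d η p x}))⁻¹ *
        ν (code d η p ⁻¹' {code d η p x} ∩ T) ∂ν
      = ∫⁻ c, q c ∂(ν.map (code d η p)) := h1
    _ = ∑' c, q c * (ν.map (code d η p)) {c} := h2
    _ = ∑' c, ν (code d η p ⁻¹' {c} ∩ T) := by simp only [hterm]
    _ = ν (⋃ c, (code d η p ⁻¹' {c} ∩ T)) := (measure_iUnion hdisj hmeas).symm
    _ = ν T := by rw [← hcover]

lemma code_upd_eq (d : Fin K → ℕ) (η : ℕ) (pa : Fin K → Finset (Fin K)) (k : Fin K)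
    (I : Finset (Fin K)) (hjk_pa : ∀ j ∈ I, j ≠ k → j ∈ pa k) (x z : Pt d)
    (hz : code d η (pa k) z = code d η (pa k) x) :
    code d η I (upd d k x (projOn d ({k} : Finset (Fin K)) z)) = code d η I z := by
  funext j i
  rcases j with ⟨jv, hjv⟩
  by_cases hjk : jv = k
  · subst hjk
    simp [code, codeOn, projOn, upd, Function.update_self]
  · have hjpa : jv ∈ pa k := hjk_pa jv hjv (fun he => hjk (by rw [he]))
    simp only [code, codeOn, projOn, upd, Function.update_of_ne hjk]
    exact (congrFun (congrFun hz ⟨jv, hjpa⟩) i).symm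

end
end Stmt4Aux5
section Stmt4Aux6
open scoped ENNReal
noncomputable section
variable {K : ℕ}

lemma chain_marg (d : Fin K → ℕ) (pa : Fin K → Finset (Fin K)) (η : ℕ)
    (hsort : SortedGraph pa) (hnc : NoColliders pa)
    (ν : Measure (Pt d)) (hν : IsProbabilityMeasure ν)
    (κ : ∀ k : Fin K, PtOn d (pa k) → Measure (PtOn d ({k} : Finset (Fin K))))
    (hκ : ∀ k, IsCondD d ν (pa k) {k} (κ k)) :
    ∀ n (I : Finset (Fin K)), FullConn pa I → (∀ j ∈ I, (j : ℕ) < n) →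
      (chainM d pa (kerA d pa η ν κ) n).map (code d η I) = ν.map (code d η I) := by
  classical
  have hm : ∀ k, Measurable (kerA d pa η ν κ k) :=
    fun k => measurable_kerA d pa η ν κ k (hκ k).1
  have hp : ∀ k y, IsProbabilityMeasure (kerA d pa η ν κ k y) :=
    fun k y => isProbabilityMeasure_kerA d pa η ν κ k (hκ k).1 (hκ k).2.1 y
  intro n
  induction n with
  | zero =>
    intro I _ hlt
    have hI : I = ∅ := Finset.eq_empty_of_forall_notMem fun j hj =>
      Nat.not_lt_zero _ (hlt j hj)
    subst hI
    haveI : IsProbabilityMeasure (chainM d pa (kerA d pa η ν κ) 0) :=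
      isProbabilityMeasure_chainM _ _ _ hm hp 0
    exact map_eq_of_subsingleton _ _ _ _ (measurable_code d η ∅) (measurable_code d η ∅)
  | succ n ih =>
    intro I hFC hlt
    by_cases h : n < K
    · set k : Fin K := ⟨n, h⟩ with hk
      rw [chainM_succ_lt d pa _ h]
      set μ := chainM d pa (kerA d pa η ν κ) n with hμdef
      have hstep : Measurable fun x : Pt d =>
          (kerA d pa η ν κ k (projOn d (pa k) x)).map (upd d k x) :=
        measurable_step d pa k _ (hm k) (fun y => hp k y)
      by_cases hkI : k ∈ I
      · -- node k is updated and belongs to I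
        have hpa_lt : ∀ j ∈ pa k, (j : ℕ) < n := fun j hj => hsort k j hj
        have ihp : μ.map (code d η (pa k)) = ν.map (code d η (pa k)) :=
          ih (pa k) (hnc k) hpa_lt
        have hjk_pa : ∀ j ∈ I, j ≠ k → j ∈ pa k := by
          intro j hj hne
          have hlt' : (j : ℕ) < n :=
            lt_of_le_of_ne (Nat.lt_succ_iff.mp (hlt j hj)) (fun he => hne (Fin.ext he))
          exact hFC j hj k hkI hlt'
        ext s hs
        have hT : MeasurableSet (code d η I ⁻¹' s) := measurable_code d η I hs
        rw [Measure.map_apply (measurable_code d η I) hs,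
          Measure.map_apply (measurable_code d η I) hs,
          Measure.bind_apply hT hstep.aemeasurable]
        set T := code d η I ⁻¹' s with hTdef
        have hae : (fun x => (kerA d pa η ν κ k (projOn d (pa k) x)).map (upd d k x) T)
            =ᵐ[μ] fun x => (ν (code d η (pa k) ⁻¹' {code d η (pa k) x}))⁻¹ *
              ν (code d η (pa k) ⁻¹' {code d η (pa k) x} ∩ T) := by
          have hbad : μ {x | ν (code d η (pa k) ⁻¹' {code d η (pa k) x}) = 0} = 0 :=
            measure_badSet_eq_zero d η (pa k) μ ν ihp
          refine ae_iff.mpr (measure_mono_null ?_ hbad)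
          intro x hx
          by_contra hpos
          apply hx
          show (kerA d pa η ν κ k (projOn d (pa k) x)).map (upd d k x) T =
            (ν (code d η (pa k) ⁻¹' {code d η (pa k) x}))⁻¹ *
              ν (code d η (pa k) ⁻¹' {code d η (pa k) x} ∩ T)
          rw [Measure.map_apply (measurable_upd_right d k x) hT,
            kerA_eq_of_pos d pa η ν κ k (hκ k) x hpos,
            Measure.smul_apply, smul_eq_mul,
            Measure.map_apply (measurable_projOn d ({k} : Finset (Fin K)))
              (measurable_upd_right d k x hT),
            Measure.restrict_apply (measurable_projOn d ({k} : Finset (Fin K))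
              (measurable_upd_right d k x hT))]
          have hseteq : projOn d ({k} : Finset (Fin K)) ⁻¹' (upd d k x ⁻¹' T) ∩
              (code d η (pa k) ⁻¹' {code d η (pa k) x}) =
              (code d η (pa k) ⁻¹' {code d η (pa k) x}) ∩ T := by
            ext z
            simp only [Set.mem_inter_iff, Set.mem_preimage, Set.mem_singleton_iff]
            constructor
            · rintro ⟨hzT, hzC⟩
              refine ⟨hzC, ?_⟩
              have := code_upd_eq d η pa k I hjk_pa x z hzC
              show code d η I z ∈ s
              rw [← this]
              exact hzT
            · rintro ⟨hzC, hzT⟩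
              refine ⟨?_, hzC⟩
              show code d η I (upd d k x (projOn d ({k} : Finset (Fin K)) z)) ∈ s
              rw [code_upd_eq d η pa k I hjk_pa x z hzC]
              exact hzT
          rw [hseteq]
        rw [lintegral_congr_ae hae]
        set q : ((j : (pa k : Finset (Fin K))) → Fin (d j.1) → ℕ) → ℝ≥0∞ := fun c =>
          (ν (code d η (pa k) ⁻¹' {c}))⁻¹ * ν (code d η (pa k) ⁻¹' {c} ∩ T) with hqdef
        have h1 : ∀ m : Measure (Pt d), ∫⁻ x, q (code d η (pa k) x) ∂m =
            ∫⁻ c, q c ∂(m.map (code d η (pa k))) := fun m =>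
          (lintegral_map (measurable_of_countable q) (measurable_code d η (pa k))).symm
        calc ∫⁻ x, (ν (code d η (pa k) ⁻¹' {code d η (pa k) x}))⁻¹ *
              ν (code d η (pa k) ⁻¹' {code d η (pa k) x} ∩ T) ∂μ
            = ∫⁻ c, q c ∂(μ.map (code d η (pa k))) := h1 μ
          _ = ∫⁻ c, q c ∂(ν.map (code d η (pa k))) := by rw [ihp]
          _ = ∫⁻ x, (ν (code d η (pa k) ⁻¹' {code d η (pa k) x}))⁻¹ *
              ν (code d η (pa k) ⁻¹' {code d η (pa k) x} ∩ T) ∂ν := (h1 ν).symm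
          _ = ν T := lintegral_cellavg d η (pa k) ν T hT
      · -- node k is updated but not in I
        have hlt' : ∀ j ∈ I, (j : ℕ) < n := by
          intro j hj
          refine lt_of_le_of_ne (Nat.lt_succ_iff.mp (hlt j hj)) (fun he => hkI ?_)
          have : j = k := Fin.ext he
          rwa [← this]
        have hkey : (μ.bind fun x =>
            (kerA d pa η ν κ k (projOn d (pa k) x)).map (upd d k x)).map (code d η I) =
            μ.map (code d η I) := by
          ext s hs
          have hT : MeasurableSet (code d η I ⁻¹' s) := measurable_code d η I hs
          rw [Measure.map_apply (measurable_code d η I) hs,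
            Measure.map_apply (measurable_code d η I) hs,
            Measure.bind_apply hT hstep.aemeasurable]
          have hcode_upd : ∀ (x : Pt d) (y : PtOn d ({k} : Finset (Fin K))),
              code d η I (upd d k x y) = code d η I x := by
            intro x y
            funext j i
            rcases j with ⟨jv, hjv⟩
            have hjk : jv ≠ k := fun he => hkI (by rwa [he] at hjv)
            simp [code, codeOn, projOn, upd, Function.update_of_ne hjk]
          have hfx : ∀ x, (kerA d pa η ν κ k (projOn d (pa k) x)).map (upd d k x)
              (code d η I ⁻¹' s) = (code d η I ⁻¹' s).indicator 1 x := by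
            intro x
            rw [Measure.map_apply (measurable_upd_right d k x) hT]
            have hpre : upd d k x ⁻¹' (code d η I ⁻¹' s) =
                if code d η I x ∈ s then Set.univ else ∅ := by
              ext y
              simp only [Set.mem_preimage, hcode_upd x y]
              split_ifs with hc <;> simp [hc]
            rw [hpre]
            by_cases hc : code d η I x ∈ s
            · rw [if_pos hc]
              haveI := hp k (projOn d (pa k) x)
              rw [measure_univ, Set.indicator_of_mem (show x ∈ code d η I ⁻¹' s from hc)]
              rfl
            · rw [if_neg hc, measure_empty,
                Set.indicator_of_notMem (show x ∉ code d η I ⁻¹' s from hc)]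
          rw [lintegral_congr hfx, lintegral_indicator_one hT]
        rw [hkey]
        exact ih I hFC hlt'
    · rw [chainM_succ_ge d pa _ h]
      refine ih I hFC fun j hj => ?_
      exact lt_of_lt_of_le j.2 (le_of_not_gt h)
end
end Stmt4Aux6
section Stmt4Aux7
open scoped ENNReal
noncomputable section
variable {K : ℕ}

lemma bind_congr_ae' {α β : Type*} [MeasurableSpace α] [MeasurableSpace β] (μ : Measure α)
    (f g : α → Measure β) (h : f =ᵐ[μ] g) : μ.bind f = μ.bind g := by
  unfold Measure.bind
  rw [Measure.map_congr h]

lemma chain_unique (d : Fin K → ℕ) (pa : Fin K → Finset (Fin K)) (η : ℕ)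
    (hsort : SortedGraph pa) (hnc : NoColliders pa)
    (ν : Measure (Pt d)) (hν : IsProbabilityMeasure ν)
    (κ κ' : ∀ k : Fin K, PtOn d (pa k) → Measure (PtOn d ({k} : Finset (Fin K))))
    (hκ : ∀ k, IsCondD d ν (pa k) {k} (κ k)) (hκ' : ∀ k, IsCondD d ν (pa k) {k} (κ' k)) :
    ∀ n, chainM d pa (kerA d pa η ν κ) n = chainM d pa (kerA d pa η ν κ') n := by
  intro n
  induction n with
  | zero => rw [chainM, chainM]
  | succ n ih =>
    by_cases h : n < K
    · rw [chainM_succ_lt d pa _ h, chainM_succ_lt d pa _ h, ih]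
      set k : Fin K := ⟨n, h⟩ with hk
      set μ := chainM d pa (kerA d pa η ν κ') n with hμ
      have ihp : μ.map (code d η (pa k)) = ν.map (code d η (pa k)) :=
        chain_marg d pa η hsort hnc ν hν κ' hκ' n (pa k) (hnc k) (fun j hj => hsort k j hj)
      have hbad : μ {x | ν (code d η (pa k) ⁻¹' {code d η (pa k) x}) = 0} = 0 :=
        measure_badSet_eq_zero d η (pa k) μ ν ihp
      refine bind_congr_ae' μ _ _ ?_
      refine ae_iff.mpr (measure_mono_null ?_ hbad)
      intro x hx
      by_contra hpos
      apply hx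
      show (kerA d pa η ν κ k (projOn d (pa k) x)).map (upd d k x) =
        (kerA d pa η ν κ' k (projOn d (pa k) x)).map (upd d k x)
      rw [kerA_eq_of_pos d pa η ν κ k (hκ k) x hpos,
        kerA_eq_of_pos d pa η ν κ' k (hκ' k) x hpos]
    · rw [chainM_succ_ge d pa _ h, chainM_succ_ge d pa _ h, ih]
end
end Stmt4Aux7
/-- Lemma: `ν^A` is well defined.
If `G` has no colliders, then `ν^A` does not depend on the choice of the regular conditional
kernels of `ν`, and for every fully connected `I ⊆ {1,…,K}` and every cell `c_I` of `A_I`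
one has `ν^A(c_I) = ν(c_I)`. -/
theorem stmt4 {K : ℕ} (d : Fin K → ℕ) (pa : Fin K → Finset (Fin K))
    (hsort : SortedGraph pa) (hnc : NoColliders pa) (η : ℕ)
    (ν : Measure (Pt d)) (hν : IsProbabilityMeasure ν) :
    (∀ κ κ' : ∀ k : Fin K, PtOn d (pa k) → Measure (PtOn d ({k} : Finset (Fin K))),
      (∀ k, IsCondD d ν (pa k) {k} (κ k)) → (∀ k, IsCondD d ν (pa k) {k} (κ' k)) →
        opA d pa η ν κ = opA d pa η ν κ') ∧
    (∀ κ : ∀ k : Fin K, PtOn d (pa k) → Measure (PtOn d ({k} : Finset (Fin K))),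
      (∀ k, IsCondD d ν (pa k) {k} (κ k)) →
        ∀ I : Finset (Fin K), FullConn pa I → ∀ x : Pt d,
          opA d pa η ν κ (cylOf d η I x) = ν (cylOf d η I x)) := by
  constructor
  · intro κ κ' hκ hκ'
    rw [opA_eq_chain, opA_eq_chain]
    exact chain_unique d pa η hsort hnc ν hν κ κ' hκ hκ' K
  · intro κ hκ I hFC x
    rw [opA_eq_chain, cylOf_eq]
    have hmarg := chain_marg d pa η hsort hnc ν hν κ hκ K I hFC (fun j _ => j.2)
    rw [← Measure.map_apply (measurable_code d η I) (MeasurableSet.singleton _), hmarg,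
      Measure.map_apply (measurable_code d η I) (MeasurableSet.singleton _)]
end

section
/- Let K = 2 with the graph 1 → 2, and let S : X_1 × X_2 → X_2 × X_1 be the coordinate swap (x_1, x_2) ↦ (x_2, x_1). Then for every μ ∈ P(X_1 × X_2), μ^{bA} = S( ( S(μ^A) )^A ), where the outer ^A-operation is performed on X_2 × X_1 with the swapped partition and graph 1 → 2. -/
open MeasureTheory Finset
open scoped ENNReal NNReal

noncomputable section Aux10

open Set

namespace Aux10

variable (η : ℕ)

lemma measurable_cIdx : Measurable (cIdx η) := by
  have h1 : Measurable fun t : I01 => (⌊(t : ℝ) * 2 ^ η⌋₊ : ℕ) :=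
    Nat.measurable_floor.comp (measurable_subtype_coe.mul_const _)
  exact (measurable_from_top (f := fun n : ℕ => min n (2 ^ η - 1))).comp h1

lemma cIdx_lt (t : I01) : cIdx η t < 2 ^ η :=
  lt_of_le_of_lt (min_le_right _ _) (Nat.sub_lt (by positivity) one_pos)

def idxF (t : I01) : Fin (2 ^ η) := ⟨cIdx η t, cIdx_lt η t⟩

lemma measurable_idxF : Measurable (idxF η) := by
  refine measurable_to_countable' fun y => ?_
  have : idxF η ⁻¹' {y} = cIdx η ⁻¹' {y.1} := by
    ext t; simp [idxF, Fin.ext_iff]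
  rw [this]; exact measurable_cIdx η (measurableSet_singleton _)

def idxV {m : ℕ} (x : Vec m) : Fin m → Fin (2 ^ η) := fun i => idxF η (x i)

lemma measurable_idxV {m : ℕ} : Measurable (idxV η (m := m)) :=
  measurable_pi_lambda _ fun i => (measurable_idxF η).comp (measurable_pi_apply i)

def cellC {m : ℕ} (c : Fin m → Fin (2 ^ η)) : Set (Vec m) := idxV η ⁻¹' {c}

lemma measurableSet_cellC {m : ℕ} (c : Fin m → Fin (2 ^ η)) : MeasurableSet (cellC η c) :=
  measurable_idxV η (measurableSet_singleton _)

def midC {m : ℕ} (c : Fin m → Fin (2 ^ η)) : Vec m := fun i =>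
  ⟨(((c i : ℕ) : ℝ) + 1 / 2) / 2 ^ η, by
    constructor
    · positivity
    · rw [div_le_one (by positivity)]
      have h2 : ((c i : ℕ) : ℝ) + 1 ≤ 2 ^ η := by exact_mod_cast Nat.succ_le_of_lt (c i).2
      linarith⟩

lemma cellV_eq {m : ℕ} (x : Vec m) : cellV η x = cellC η (idxV η x) := by
  ext y
  simp [cellV, cellC, idxV, idxF, funext_iff, Fin.ext_iff]

lemma midV_eq {m : ℕ} (x : Vec m) : midV η x = midC η (idxV η x) := by
  funext i
  apply Subtype.ext
  rfl

lemma lintegral_fiber {α ι : Type*} [MeasurableSpace α] [Fintype ι] [MeasurableSpace ι]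
    [MeasurableSingletonClass ι] (μ : Measure α) (f : α → ι) (hf : Measurable f)
    (g : ι → α → ℝ≥0∞) (hg : ∀ i, Measurable (g i)) :
    ∫⁻ a, g (f a) a ∂μ = ∑ i, ∫⁻ a in f ⁻¹' {i}, g i a ∂μ := by
  have h1 : ∀ a, g (f a) a = ∑ i, (f ⁻¹' {i}).indicator (g i) a := by
    intro a
    rw [Finset.sum_eq_single (f a)]
    · simp [Set.indicator_apply]
    · intro b _ hb
      simp [Set.indicator_apply, Ne.symm hb]
    · simp
  calc ∫⁻ a, g (f a) a ∂μ = ∫⁻ a, ∑ i, (f ⁻¹' {i}).indicator (g i) a ∂μ :=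
        lintegral_congr h1
    _ = ∑ i, ∫⁻ a, (f ⁻¹' {i}).indicator (g i) a ∂μ :=
        lintegral_finset_sum _ fun i _ => (hg i).indicator (hf (measurableSet_singleton i))
    _ = ∑ i, ∫⁻ a in f ⁻¹' {i}, g i a ∂μ := by
        refine Finset.sum_congr rfl fun i _ => ?_
        rw [lintegral_indicator (hf (measurableSet_singleton i))]

lemma sum_measure_fiber {α ι : Type*} [MeasurableSpace α] [Fintype ι] [MeasurableSpace ι]
    [MeasurableSingletonClass ι] (μ : Measure α) (f : α → ι) (hf : Measurable f) :
    ∑ i, μ (f ⁻¹' {i}) = μ univ := by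
  rw [sum_measure_preimage_singleton _ fun i _ => hf (measurableSet_singleton i)]
  simp

lemma sum_measure_inter_fiber {α ι : Type*} [MeasurableSpace α] [Fintype ι] [MeasurableSpace ι]
    [MeasurableSingletonClass ι] (μ : Measure α) (f : α → ι) (hf : Measurable f) (s : Set α) :
    ∑ i, μ (s ∩ f ⁻¹' {i}) = μ s := by
  have h : ∀ i, μ (s ∩ f ⁻¹' {i}) = μ.restrict s (f ⁻¹' {i}) := fun i => by
    rw [Measure.restrict_apply (hf (measurableSet_singleton i)), Set.inter_comm]
  simp_rw [h]
  rw [sum_measure_fiber _ f hf, Measure.restrict_apply_univ]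

lemma measurable_fiber_piece {α β ι : Type*} [MeasurableSpace α] [MeasurableSpace β]
    [Countable ι] [MeasurableSpace ι] [MeasurableSingletonClass ι]
    (f : α → ι) (hf : Measurable f) (g : ι → α → β) (hg : ∀ i, Measurable (g i)) :
    Measurable fun a => g (f a) a := by
  have h : (fun a => g (f a) a) = (fun q : α × ι => g q.2 q.1) ∘ fun a => (a, f a) := rfl
  rw [h]
  exact (measurable_from_prod_countable_left fun i => hg i).comp (measurable_id.prodMk hf)

lemma condOn_apply {α : Type*} [MeasurableSpace α] (m : Measure α) {s : Set α} (hs0 : m s ≠ 0)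
    (x₀ : α) {t : Set α} (ht : MeasurableSet t) :
    condOn m s x₀ t = (m s)⁻¹ * m (t ∩ s) := by
  rw [condOn, if_neg hs0, Measure.smul_apply, smul_eq_mul, Measure.restrict_apply ht]

lemma isProbabilityMeasure_condOn {α : Type*} [MeasurableSpace α] (m : Measure α)
    [IsFiniteMeasure m] (s : Set α) (x₀ : α) : IsProbabilityMeasure (condOn m s x₀) := by
  rw [condOn]
  split_ifs with h
  · infer_instance
  · constructor
    rw [Measure.smul_apply, smul_eq_mul, Measure.restrict_apply_univ]
    exact ENNReal.inv_mul_cancel h (measure_ne_top m s)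

lemma inv_mul_mul_self {x b : ℝ≥0∞} (hx : x ≠ ∞) (hbx : b ≤ x) : x⁻¹ * b * x = b := by
  rcases eq_or_ne x 0 with h | h
  · simp [h, le_antisymm (h ▸ hbx) zero_le]
  · rw [mul_comm, ← mul_assoc, ENNReal.mul_inv_cancel h hx, one_mul]

def idxP {a b : ℕ} (p : Vec a × Vec b) : (Fin a → Fin (2 ^ η)) × (Fin b → Fin (2 ^ η)) :=
  (idxV η p.1, idxV η p.2)

lemma measurable_idxP {a b : ℕ} : Measurable (idxP η (a := a) (b := b)) :=
  ((measurable_idxV η).comp measurable_fst).prodMk ((measurable_idxV η).comp measurable_snd)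

lemma idxP_fiber {a b : ℕ} (i : Fin a → Fin (2 ^ η)) (j : Fin b → Fin (2 ^ η)) :
    idxP η (a := a) (b := b) ⁻¹' {(i, j)} = cellC η i ×ˢ cellC η j := by
  ext p
  simp [idxP, cellC, Prod.ext_iff]

lemma fst_fiber {a b : ℕ} (i : Fin a → Fin (2 ^ η)) :
    (fun p : Vec a × Vec b => idxV η p.1) ⁻¹' {i} = cellC η i ×ˢ univ := by
  rw [Set.prod_univ]; rfl

lemma snd_fiber {a b : ℕ} (j : Fin b → Fin (2 ^ η)) :
    (fun p : Vec a × Vec b => idxV η p.2) ⁻¹' {j} = univ ×ˢ cellC η j := by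
  rw [Set.univ_prod]; rfl

/-- Rectangle values of `opA2`. -/
lemma opA2_rect {a b : ℕ} (ν : Measure (Vec a × Vec b)) [IsFiniteMeasure ν]
    {A : Set (Vec a)} {B : Set (Vec b)} (hA : MeasurableSet A) (hB : MeasurableSet B) :
    opA2 η ν (A ×ˢ B) =
      ∑ i : Fin a → Fin (2 ^ η),
        (ν (cellC η i ×ˢ univ))⁻¹ * ν (cellC η i ×ˢ B) * ν ((A ∩ cellC η i) ×ˢ univ) := by
  classical
  set Ψ : (Fin a → Fin (2 ^ η)) × (Fin b → Fin (2 ^ η)) → Measure (Vec b) := fun c =>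
    (condOn ν (Prod.fst ⁻¹' cellC η c.1) (midC η c.1, midC η c.2)).map Prod.snd with hΨ
  have hΨprob : ∀ c, IsProbabilityMeasure (Ψ c) := fun c => by
    haveI := isProbabilityMeasure_condOn ν (Prod.fst ⁻¹' cellC η c.1) (midC η c.1, midC η c.2)
    exact Measure.isProbabilityMeasure_map measurable_snd.aemeasurable
  set κ : Vec a × Vec b → Measure (Vec a × Vec b) := fun p =>
    (Ψ (idxP η p)).map (Prod.mk p.1) with hκ
  have hbind : opA2 η ν = ν.bind κ := by
    rw [opA2]
    congr 1
    funext p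
    rw [cellV_eq η p.1, midV_eq η p.1, midV_eq η p.2]
    rfl
  have hκmeas : Measurable κ := by
    apply Measure.measurable_of_measurable_coe
    intro s hs
    have h1 : (fun p : Vec a × Vec b => κ p s) =
        fun p => Ψ (idxP η p) (Prod.mk p.1 ⁻¹' s) := by
      funext p
      exact Measure.map_apply measurable_prodMk_left hs
    rw [h1]
    refine measurable_fiber_piece (idxP η) (measurable_idxP η)
      (fun c p => Ψ c (Prod.mk p.1 ⁻¹' s)) fun c => ?_
    haveI := hΨprob c
    exact (measurable_measure_prodMk_left hs).comp measurable_fst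
  rw [hbind, Measure.bind_apply (hA.prod hB) hκmeas.aemeasurable]
  have hint : ∀ p : Vec a × Vec b, κ p (A ×ˢ B) =
      (Prod.fst ⁻¹' A).indicator (fun _ => Ψ (idxP η p) B) p := by
    intro p
    rw [hκ]
    rw [Measure.map_apply measurable_prodMk_left (hA.prod hB),
      Set.mk_preimage_prod_right_eq_if]
    by_cases h : p.1 ∈ A <;> simp [Set.indicator_apply, h]
  rw [lintegral_congr hint]
  rw [lintegral_fiber ν (idxP η)
    (measurable_idxP η)
    (fun c p => (Prod.fst ⁻¹' A).indicator (fun _ => Ψ c B) p)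
    (fun c => measurable_const.indicator (measurable_fst hA))]
  rw [Fintype.sum_prod_type]
  refine Finset.sum_congr rfl fun i _ => ?_
  have hterm : ∀ j, ∫⁻ p in idxP η ⁻¹' {(i, j)},
      (Prod.fst ⁻¹' A).indicator (fun _ => Ψ (i, j) B) p ∂ν =
      Ψ (i, j) B * ν ((A ∩ cellC η i) ×ˢ cellC η j) := by
    intro j
    rw [lintegral_indicator (measurable_fst hA), Measure.restrict_restrict (measurable_fst hA),
      setLIntegral_const, idxP_fiber, ← Set.prod_univ, Set.prod_inter_prod, Set.univ_inter]
  simp_rw [hterm]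
  by_cases h0 : ν (cellC η i ×ˢ univ) = 0
  · have hz : ∀ j : Fin b → Fin (2 ^ η), ν ((A ∩ cellC η i) ×ˢ cellC η j) = 0 := fun j =>
      measure_mono_null (Set.prod_mono Set.inter_subset_right (Set.subset_univ _)) h0
    have hz2 : ν (cellC η i ×ˢ B) = 0 :=
      measure_mono_null (Set.prod_mono subset_rfl (Set.subset_univ _)) h0
    simp [hz, hz2]
  · have h0' : ν (Prod.fst ⁻¹' cellC η i) ≠ 0 := by rwa [← Set.prod_univ]
    have hΨval : ∀ j, Ψ (i, j) B = (ν (cellC η i ×ˢ univ))⁻¹ * ν (cellC η i ×ˢ B) := by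
      intro j
      rw [hΨ]
      simp only
      rw [Measure.map_apply measurable_snd hB, condOn_apply ν h0' _ (measurable_snd hB),
        ← Set.prod_univ, ← Set.univ_prod, Set.prod_inter_prod, Set.univ_inter, Set.inter_univ]
    simp_rw [hΨval]
    rw [← Finset.mul_sum]
    have hj : ∑ j : Fin b → Fin (2 ^ η), ν ((A ∩ cellC η i) ×ˢ cellC η j) =
        ν ((A ∩ cellC η i) ×ˢ univ) := by
      have he : ∀ j : Fin b → Fin (2 ^ η), (A ∩ cellC η i) ×ˢ cellC η j =
          ((A ∩ cellC η i) ×ˢ univ) ∩ ((fun p : Vec a × Vec b => idxV η p.2) ⁻¹' {j}) := by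
        intro j
        rw [snd_fiber, Set.prod_inter_prod, Set.inter_univ, Set.univ_inter]
      simp_rw [he]
      exact sum_measure_inter_fiber ν _ ((measurable_idxV η).comp measurable_snd) _
    rw [hj, mul_assoc]

/-- Rectangle values of `opBA2`. -/
lemma opBA2_rect {a b : ℕ} (μ : Measure (Vec a × Vec b)) [IsProbabilityMeasure μ]
    {A : Set (Vec a)} {B : Set (Vec b)} (hA : MeasurableSet A) (hB : MeasurableSet B) :
    opBA2 η μ (A ×ˢ B) =
      ∑ i : Fin a → Fin (2 ^ η), ∑ j : Fin b → Fin (2 ^ η),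
        μ (cellC η i ×ˢ cellC η j) *
          (condOn (μ.map Prod.fst) (cellC η i) (midC η i) A *
            condOn (μ.map Prod.snd) (cellC η j) (midC η j) B) := by
  classical
  haveI h1 : IsProbabilityMeasure (μ.map Prod.fst) :=
    Measure.isProbabilityMeasure_map measurable_fst.aemeasurable
  haveI h2 : IsProbabilityMeasure (μ.map Prod.snd) :=
    Measure.isProbabilityMeasure_map measurable_snd.aemeasurable
  set G : (Fin a → Fin (2 ^ η)) × (Fin b → Fin (2 ^ η)) → Measure (Vec a × Vec b) := fun c =>
    (condOn (μ.map Prod.fst) (cellC η c.1) (midC η c.1)).prod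
      (condOn (μ.map Prod.snd) (cellC η c.2) (midC η c.2)) with hG
  have hbind : opBA2 η μ = μ.bind fun p => G (idxP η p) := by
    rw [opBA2]
    congr 1
    funext p
    rw [cellV_eq η p.1, midV_eq η p.1, cellV_eq η p.2, midV_eq η p.2]
    rfl
  have hGmeas : Measurable fun p : Vec a × Vec b => G (idxP η p) :=
    (measurable_of_countable G).comp (measurable_idxP η)
  rw [hbind, Measure.bind_apply (hA.prod hB) hGmeas.aemeasurable]
  rw [lintegral_fiber μ (idxP η) (measurable_idxP η)
    (fun c _ => G c (A ×ˢ B)) (fun c => measurable_const)]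
  rw [Fintype.sum_prod_type]
  refine Finset.sum_congr rfl fun i _ => Finset.sum_congr rfl fun j _ => ?_
  rw [setLIntegral_const, idxP_fiber]
  haveI := isProbabilityMeasure_condOn (μ.map Prod.snd) (cellC η j) (midC η j)
  rw [hG]
  simp only
  rw [Measure.prod_prod, mul_comm]

end Aux10

end Aux10

/-- Lemma: `μ^{bA}` as a twofold application of the `^A`-operation.
For two blocks with graph `1 → 2` and the coordinate swap `S`, for every probability measure
`μ` on `X₁ × X₂` we have `μ^{bA} = S(((S(μ^A))^A))`. -/
theorem stmt10 {m₁ m₂ : ℕ} (η : ℕ) (μ : Measure (Vec m₁ × Vec m₂))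
    (hμ : IsProbabilityMeasure μ) :
    opBA2 η μ = (opA2 η ((opA2 η μ).map Prod.swap)).map Prod.swap := by
  classical
  open Set Aux10 in
  haveI := hμ
  -- abbreviations
  set ν := opA2 η μ with hνdef
  -- marginal maps of μ on rectangles
  have hmap1 : ∀ {s : Set (Vec m₁)}, MeasurableSet s → μ.map Prod.fst s = μ (s ×ˢ univ) := by
    intro s hs
    rw [Measure.map_apply measurable_fst hs, Set.prod_univ]
  have hmap2 : ∀ {s : Set (Vec m₂)}, MeasurableSet s → μ.map Prod.snd s = μ (univ ×ˢ s) := by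
    intro s hs
    rw [Measure.map_apply measurable_snd hs, Set.univ_prod]
  -- values of ν on rectangles
  have hνval : ∀ {A : Set (Vec m₁)} {B : Set (Vec m₂)}, MeasurableSet A → MeasurableSet B →
      ν (A ×ˢ B) = ∑ i : Fin m₁ → Fin (2 ^ η),
        (μ (cellC η i ×ˢ univ))⁻¹ * μ (cellC η i ×ˢ B) * μ ((A ∩ cellC η i) ×ˢ univ) :=
    fun hA hB => opA2_rect η μ hA hB
  -- second marginal of ν agrees with that of μ
  have hν2 : ∀ {B : Set (Vec m₂)}, MeasurableSet B → ν (univ ×ˢ B) = μ (univ ×ˢ B) := by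
    intro B hB
    rw [hνval MeasurableSet.univ hB]
    have hterm : ∀ i : Fin m₁ → Fin (2 ^ η),
        (μ (cellC η i ×ˢ univ))⁻¹ * μ (cellC η i ×ˢ B) * μ ((univ ∩ cellC η i) ×ˢ univ) =
          μ (cellC η i ×ˢ B) := by
      intro i
      rw [Set.univ_inter]
      exact inv_mul_mul_self (measure_ne_top μ _)
        (measure_mono (Set.prod_mono subset_rfl (Set.subset_univ _)))
    simp_rw [hterm]
    have he : ∀ i : Fin m₁ → Fin (2 ^ η), cellC η i ×ˢ B =
        (univ ×ˢ B) ∩ ((fun p : Vec m₁ × Vec m₂ => idxV η p.1) ⁻¹' {i}) := by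
      intro i
      rw [fst_fiber, Set.prod_inter_prod, Set.univ_inter, Set.inter_univ]
    simp_rw [he]
    exact sum_measure_inter_fiber μ _ ((measurable_idxV η).comp measurable_fst) _
  -- ν is a probability measure
  haveI hνprob : IsProbabilityMeasure ν := by
    constructor
    rw [← Set.univ_prod_univ, hν2 MeasurableSet.univ, Set.univ_prod_univ, measure_univ]
  set ρ := ν.map Prod.swap with hρdef
  haveI hρprob : IsProbabilityMeasure ρ :=
    Measure.isProbabilityMeasure_map measurable_swap.aemeasurable
  have hρval : ∀ {S : Set (Vec m₂)} {T : Set (Vec m₁)}, MeasurableSet S → MeasurableSet T →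
      ρ (S ×ˢ T) = ν (T ×ˢ S) := by
    intro S T hS hT
    rw [hρdef, Measure.map_apply measurable_swap (hS.prod hT), Set.preimage_swap_prod]
  -- key rectangle identity
  have key : ∀ {A : Set (Vec m₁)} {B : Set (Vec m₂)}, MeasurableSet A → MeasurableSet B →
      opBA2 η μ (A ×ˢ B) = (opA2 η ρ).map Prod.swap (A ×ˢ B) := by
    intro A B hA hB
    rw [Measure.map_apply measurable_swap (hA.prod hB), Set.preimage_swap_prod]
    rw [opA2_rect η ρ hB hA]
    have hρ1 : ∀ i : Fin m₂ → Fin (2 ^ η), ρ (cellC η i ×ˢ Set.univ) = μ (Set.univ ×ˢ cellC η i) := by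
      intro i
      rw [hρval (measurableSet_cellC η i) MeasurableSet.univ, hν2 (measurableSet_cellC η i)]
    have hρ2 : ∀ i : Fin m₂ → Fin (2 ^ η), ρ (cellC η i ×ˢ A) = ν (A ×ˢ cellC η i) :=
      fun i => hρval (measurableSet_cellC η i) hA
    have hρ3 : ∀ i : Fin m₂ → Fin (2 ^ η),
        ρ ((B ∩ cellC η i) ×ˢ Set.univ) = μ (Set.univ ×ˢ (B ∩ cellC η i)) := by
      intro i
      rw [hρval (hB.inter (measurableSet_cellC η i)) MeasurableSet.univ,
        hν2 (hB.inter (measurableSet_cellC η i))]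
    simp_rw [hρ1, hρ2, hρ3]
    simp_rw [fun i : Fin m₂ → Fin (2 ^ η) => hνval hA (measurableSet_cellC η i)]
    rw [opBA2_rect η μ hA hB]
    rw [Finset.sum_comm]
    refine Finset.sum_congr rfl fun i _ => ?_
    rw [Finset.mul_sum, Finset.sum_mul]
    refine Finset.sum_congr rfl fun k _ => ?_
    -- per-term identity
    by_cases hk : μ (cellC η k ×ˢ univ) = 0
    · have hw : μ (cellC η k ×ˢ cellC η i) = 0 :=
        measure_mono_null (Set.prod_mono subset_rfl (Set.subset_univ _)) hk
      simp [hw]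
    by_cases hi : μ (univ ×ˢ cellC η i) = 0
    · have hw : μ (cellC η k ×ˢ cellC η i) = 0 :=
        measure_mono_null (Set.prod_mono (Set.subset_univ _) subset_rfl) hi
      simp [hw]
    have hc1 : condOn (μ.map Prod.fst) (cellC η k) (midC η k) A =
        (μ (cellC η k ×ˢ univ))⁻¹ * μ ((A ∩ cellC η k) ×ˢ univ) := by
      rw [condOn_apply _ (by rw [hmap1 (measurableSet_cellC η k)]; exact hk) _ hA,
        hmap1 (measurableSet_cellC η k), hmap1 (hA.inter (measurableSet_cellC η k))]
    have hc2 : condOn (μ.map Prod.snd) (cellC η i) (midC η i) B =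
        (μ (univ ×ˢ cellC η i))⁻¹ * μ (univ ×ˢ (B ∩ cellC η i)) := by
      rw [condOn_apply _ (by rw [hmap2 (measurableSet_cellC η i)]; exact hi) _ hB,
        hmap2 (measurableSet_cellC η i), hmap2 (hB.inter (measurableSet_cellC η i))]
    rw [hc1, hc2]
    ring
  haveI hA2prob : IsProbabilityMeasure (opA2 η ρ) := by
    constructor
    rw [← Set.univ_prod_univ, opA2_rect η ρ MeasurableSet.univ MeasurableSet.univ]
    have hterm : ∀ i : Fin m₂ → Fin (2 ^ η),
        (ρ (cellC η i ×ˢ Set.univ))⁻¹ * ρ (cellC η i ×ˢ Set.univ) *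
          ρ ((Set.univ ∩ cellC η i) ×ˢ Set.univ) = ρ (cellC η i ×ˢ Set.univ) := by
      intro i
      rw [Set.univ_inter]
      exact inv_mul_mul_self (measure_ne_top ρ _) le_rfl
    simp_rw [hterm]
    have he : ∀ i : Fin m₂ → Fin (2 ^ η), cellC η i ×ˢ (Set.univ : Set (Vec m₁)) =
        (Set.univ : Set (Vec m₂ × Vec m₁)) ∩
          ((fun p : Vec m₂ × Vec m₁ => idxV η p.1) ⁻¹' {i}) := by
      intro i
      rw [fst_fiber, Set.univ_inter]
    simp_rw [he]
    have hsum := sum_measure_inter_fiber ρ (fun p : Vec m₂ × Vec m₁ => idxV η p.1)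
      ((measurable_idxV η).comp measurable_fst) Set.univ
    rw [hsum]
    exact measure_univ
  haveI : IsProbabilityMeasure ((opA2 η ρ).map Prod.swap) :=
    Measure.isProbabilityMeasure_map measurable_swap.aemeasurable
  -- opBA2 is a finite measure
  haveI hfin : IsFiniteMeasure (opBA2 η μ) := by
    constructor
    rw [← Set.univ_prod_univ, key MeasurableSet.univ MeasurableSet.univ]
    exact measure_lt_top _ _
  -- conclude by the π-system argument
  refine ext_of_generate_finite _ generateFrom_prod.symm isPiSystem_prod ?_ ?_
  · rintro s ⟨A, hA, B, hB, rfl⟩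
    exact key hA hB
  · rw [← Set.univ_prod_univ]
    exact key MeasurableSet.univ MeasurableSet.univ
end
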